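/- arXiv:1811.06247 — 7 statements merged into one kernel-verified Lean document; each statement's English description precedes it below -/
import Mathlib

section
/- Let Λ ≥ 1 and t be natural numbers, and let L_1 ≥ L_2 ≥ … ≥ L_Λ be a nonincreasing sequence of natural numbers. For each integer j ≥ 1 define a_j = |{λ ∈ {1,…,Λ} : L_λ < j}|. Then Σ_{j=1}^{L_1} ( C(Λ, t+1) − C(a_j, t+1) ) = Σ_{i=1}^{Λ} L_i · C(Λ−i, t). -/
lemma hockey_aux (n t : ℕ) : ∑ m ∈ Finset.range n, Nat.choose m t = Nat.choose n (t + 1) := by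
  induction n with
  | zero => simp
  | succ n ih =>
    rw [Finset.sum_range_succ, ih, Nat.choose_succ_succ, Nat.add_comm]

lemma hockey_ico (a n t : ℕ) (h : a ≤ n) :
    ∑ m ∈ Finset.Ico a n, Nat.choose m t = Nat.choose n (t + 1) - Nat.choose a (t + 1) := by
  have h0 : ∑ m ∈ Finset.Ico 0 a, Nat.choose m t + ∑ m ∈ Finset.Ico a n, Nat.choose m t
      = ∑ m ∈ Finset.Ico 0 n, Nat.choose m t :=
    Finset.sum_Ico_consecutive _ (Nat.zero_le a) h
  rw [← Finset.range_eq_Ico, ← Finset.range_eq_Ico] at h0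
  rw [hockey_aux, hockey_aux] at h0
  omega

/-- For a nonincreasing profile `L` on `{1,…,Λ}`, with `a j` the number of caches
`λ ∈ {1,…,Λ}` with `L λ < j`, the total number of transmissions
`Σ_{j=1}^{L 1} (C(Λ, t+1) − C(a j, t+1))` equals `Σ_{i=1}^{Λ} L i · C(Λ−i, t)`. -/
theorem stmt_0 (Λ t : ℕ) (hΛ : 1 ≤ Λ) (L : ℕ → ℕ)
    (hmono : ∀ i j, 1 ≤ i → i ≤ j → j ≤ Λ → L j ≤ L i)
    (a : ℕ → ℕ)
    (ha : ∀ j, a j = ((Finset.Icc 1 Λ).filter (fun l => L l < j)).card) :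
    ∑ j ∈ Finset.Icc 1 (L 1), (Nat.choose Λ (t + 1) - Nat.choose (a j) (t + 1))
      = ∑ i ∈ Finset.Icc 1 Λ, L i * Nat.choose (Λ - i) t := by
  -- S j : the set of caches with L i ≥ j; it is a prefix
  set S : ℕ → Finset ℕ := fun j => (Finset.Icc 1 Λ).filter (fun l => j ≤ L l) with hSdef
  have hprefix : ∀ j, S j = Finset.Icc 1 ((S j).card) := by
    intro j
    ext i
    simp only [Finset.mem_Icc]
    constructor
    · intro hi
      have hi' := hi
      rw [hSdef, Finset.mem_filter, Finset.mem_Icc] at hi'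
      refine ⟨hi'.1.1, ?_⟩
      have hsub : Finset.Icc 1 i ⊆ S j := by
        intro k hk
        rw [Finset.mem_Icc] at hk
        rw [hSdef, Finset.mem_filter, Finset.mem_Icc]
        exact ⟨⟨hk.1, hk.2.trans hi'.1.2⟩, le_trans hi'.2 (hmono k i hk.1 hk.2 hi'.1.2)⟩
      have := Finset.card_le_card hsub
      simpa using this
    · rintro ⟨h1, h2⟩
      by_contra hni
      have hsub : S j ⊆ Finset.Icc 1 (i - 1) := by
        intro k hk
        rw [hSdef, Finset.mem_filter, Finset.mem_Icc] at hk
        rw [Finset.mem_Icc]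
        refine ⟨hk.1.1, ?_⟩
        by_contra hki
        apply hni
        rw [hSdef, Finset.mem_filter, Finset.mem_Icc]
        have hik : i ≤ k := by omega
        exact ⟨⟨h1, hik.trans hk.1.2⟩, le_trans hk.2 (hmono i k h1 hik hk.1.2)⟩
      have := Finset.card_le_card hsub
      simp [Nat.card_Icc] at this
      omega
  have hcard : ∀ j, (S j).card ≤ Λ := by
    intro j
    have : S j ⊆ Finset.Icc 1 Λ := Finset.filter_subset _ _
    have := Finset.card_le_card this
    simpa [Nat.card_Icc] using this
  have haS : ∀ j, a j = Λ - (S j).card := by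
    intro j
    have hc : ((Finset.Icc 1 Λ).filter (fun l => L l < j)).card
        + ((Finset.Icc 1 Λ).filter (fun l => ¬ L l < j)).card = (Finset.Icc 1 Λ).card :=
      Finset.card_filter_add_card_filter_not _
    have heq : (Finset.Icc 1 Λ).filter (fun l => ¬ L l < j) = S j := by
      rw [hSdef]
      apply Finset.filter_congr
      intro x _
      simp [Nat.not_lt]
    rw [heq] at hc
    rw [ha j]
    simp [Nat.card_Icc] at hc
    omega
  -- key: each summand equals the sum over the prefix
  have hkey : ∀ j, Nat.choose Λ (t + 1) - Nat.choose (a j) (t + 1)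
      = ∑ i ∈ S j, Nat.choose (Λ - i) t := by
    intro j
    rw [hprefix j]
    set c := (S j).card with hc
    have hcΛ : c ≤ Λ := hcard j
    have hre : ∑ i ∈ Finset.Icc 1 c, Nat.choose (Λ - i) t
        = ∑ m ∈ Finset.Ico (Λ - c) Λ, Nat.choose m t := by
      apply Finset.sum_nbij' (fun i => Λ - i) (fun m => Λ - m)
      · intro x hx
        rw [Finset.mem_Icc] at hx
        rw [Finset.mem_Ico]
        omega
      · intro x hx
        rw [Finset.mem_Ico] at hx
        rw [Finset.mem_Icc]
        omega
      · intro x hx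
        rw [Finset.mem_Icc] at hx
        omega
      · intro x hx
        rw [Finset.mem_Ico] at hx
        omega
      · intro x hx
        rfl
    rw [hre, hockey_ico _ _ _ (Nat.sub_le _ _), haS j]
  calc ∑ j ∈ Finset.Icc 1 (L 1), (Nat.choose Λ (t + 1) - Nat.choose (a j) (t + 1))
      = ∑ j ∈ Finset.Icc 1 (L 1), ∑ i ∈ S j, Nat.choose (Λ - i) t := by
        exact Finset.sum_congr rfl fun j _ => hkey j
    _ = ∑ j ∈ Finset.Icc 1 (L 1), ∑ i ∈ Finset.Icc 1 Λ,
          if j ≤ L i then Nat.choose (Λ - i) t else 0 := by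
        refine Finset.sum_congr rfl fun j _ => ?_
        rw [hSdef]
        exact Finset.sum_filter _ _
    _ = ∑ i ∈ Finset.Icc 1 Λ, ∑ j ∈ Finset.Icc 1 (L 1),
          if j ≤ L i then Nat.choose (Λ - i) t else 0 := Finset.sum_comm
    _ = ∑ i ∈ Finset.Icc 1 Λ, L i * Nat.choose (Λ - i) t := by
        refine Finset.sum_congr rfl fun i hi => ?_
        rw [Finset.mem_Icc] at hi
        have hLi : L i ≤ L 1 := hmono 1 i le_rfl hi.1 hi.2
        rw [← Finset.sum_filter]
        have : (Finset.Icc 1 (L 1)).filter (fun j => j ≤ L i) = Finset.Icc 1 (L i) := by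
          ext j
          simp only [Finset.mem_filter, Finset.mem_Icc]
          omega
        rw [this, Finset.sum_const, Nat.card_Icc]
        simp [Nat.mul_comm]
end

section
/- Let Λ ≥ 1, N_0 ≥ 1 and t ≤ Λ be natural numbers, and let K be a natural number divisible by Λ. Then, as rational numbers, (1/N_0) · ( Σ_{r=1}^{Λ} (K/Λ) · C(Λ−r, t) ) / C(Λ, t) = K·(1 − t/Λ) / (N_0·(t+1)). -/
lemma aux_sum (Λ t : ℕ) (hΛ : 1 ≤ Λ) :
    ∑ r ∈ Finset.Icc 1 Λ, (Λ - r).choose t = Λ.choose (t + 1) := by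
  have h : ∑ r ∈ Finset.Icc 1 Λ, (Λ - r).choose t = ∑ j ∈ Finset.range Λ, j.choose t := by
    apply Finset.sum_nbij' (fun r => Λ - r) (fun j => Λ - j) <;>
      intro a ha <;> simp_all <;> omega
  rw [h]
  have : ∑ j ∈ Finset.range Λ, j.choose t = ∑ j ∈ Finset.Icc t (Λ - 1), j.choose t := by
    rw [Finset.range_eq_Ico, show Λ = Λ - 1 + 1 by omega, ← Finset.Ico_add_one_right_eq_Icc]
    symm
    apply Finset.sum_subset
    · intro x hx; simp at hx ⊢; omega
    · intro x hx hx'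
      simp at hx hx'
      exact Nat.choose_eq_zero_of_lt (by omega)
  rw [this, Nat.sum_Icc_choose, show Λ - 1 + 1 = Λ by omega]

/-- Uniform profile closed form: for `Λ ≥ 1`, `N0 ≥ 1`, `t ≤ Λ` and `Λ ∣ K`,
`(1/N0) · (Σ_{r=1}^{Λ} (K/Λ)·C(Λ−r,t)) / C(Λ,t) = K·(1 − t/Λ)/(N0·(t+1))`. -/
theorem stmt_2 (Λ N0 t K : ℕ) (hΛ : 1 ≤ Λ) (hN0 : 1 ≤ N0) (ht : t ≤ Λ)
    (hK : Λ ∣ K) :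
    (1 / (N0 : ℚ)) *
        ((∑ r ∈ Finset.Icc 1 Λ, ((K : ℚ) / (Λ : ℚ)) * (Nat.choose (Λ - r) t : ℚ)) /
          (Nat.choose Λ t : ℚ))
      = (K : ℚ) * (1 - (t : ℚ) / (Λ : ℚ)) / ((N0 : ℚ) * ((t : ℚ) + 1)) := by
  have hΛ0 : (Λ : ℚ) ≠ 0 := Nat.cast_ne_zero.mpr (by omega)
  have hN00 : (N0 : ℚ) ≠ 0 := Nat.cast_ne_zero.mpr (by omega)
  have hc0 : (Λ.choose t : ℚ) ≠ 0 := Nat.cast_ne_zero.mpr (Nat.choose_pos ht).ne'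
  have hsum : ∑ r ∈ Finset.Icc 1 Λ, ((K : ℚ) / (Λ : ℚ)) * ((Λ - r).choose t : ℚ)
      = ((K : ℚ) / (Λ : ℚ)) * (Λ.choose (t + 1) : ℚ) := by
    rw [← Finset.mul_sum, ← Nat.cast_sum, aux_sum Λ t hΛ]
  rw [hsum]
  have hkey : (Λ.choose (t + 1) : ℚ) * ((t : ℚ) + 1) = (Λ.choose t : ℚ) * ((Λ : ℚ) - t) := by
    have h2 := congrArg (Nat.cast : ℕ → ℚ) (Nat.choose_succ_right_eq Λ t)
    push_cast [Nat.cast_sub ht] at h2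
    exact h2
  have ht1 : (t : ℚ) + 1 ≠ 0 := by positivity
  field_simp
  linear_combination (K : ℚ) * hkey
end

section
/- Let Λ ≥ 1 and t ≤ Λ be natural numbers, and let L_1 ≥ L_2 ≥ … ≥ L_Λ be a nonincreasing sequence of natural numbers with Σ_{r=1}^{Λ} L_r = K. Then, as rational numbers, Σ_{r=1}^{Λ} L_r · C(Λ−r, t) ≥ (K/Λ) · C(Λ, t+1). -/
lemma hockey (Λ t : ℕ) (hΛ : 1 ≤ Λ) :
    ∑ r ∈ Finset.Icc 1 Λ, Nat.choose (Λ - r) t = Nat.choose Λ (t + 1) := by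
  have h1 : ∑ r ∈ Finset.Icc 1 Λ, Nat.choose (Λ - r) t
      = ∑ m ∈ Finset.Icc 0 (Λ - 1), Nat.choose m t := by
    refine Finset.sum_nbij' (fun r => Λ - r) (fun m => Λ - m) ?_ ?_ ?_ ?_ ?_
    · simp only [Finset.mem_Icc]; intros; omega
    · simp only [Finset.mem_Icc]; intros; omega
    · simp only [Finset.mem_Icc]; intros; omega
    · simp only [Finset.mem_Icc]; intros; omega
    · intros; rfl
  have h2 : ∑ m ∈ Finset.Icc 0 (Λ - 1), Nat.choose m t
      = ∑ m ∈ Finset.Icc t (Λ - 1), Nat.choose m t := by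
    symm
    apply Finset.sum_subset
    · intro x hx; simp only [Finset.mem_Icc] at *; omega
    · intro x hx hx'
      simp only [Finset.mem_Icc] at *
      exact Nat.choose_eq_zero_of_lt (by omega)
  rw [h1, h2, Nat.sum_Icc_choose]
  congr 1
  omega

/-- For a nonincreasing profile `L` on `{1,…,Λ}` with total `K`,
`Σ_{r=1}^{Λ} L r · C(Λ−r, t) ≥ (K/Λ) · C(Λ, t+1)` as rationals. -/
theorem stmt_3 (Λ t K : ℕ) (hΛ : 1 ≤ Λ) (ht : t ≤ Λ) (L : ℕ → ℕ)
    (hmono : ∀ i j, 1 ≤ i → i ≤ j → j ≤ Λ → L j ≤ L i)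
    (hsum : ∑ r ∈ Finset.Icc 1 Λ, L r = K) :
    ((K : ℚ) / (Λ : ℚ)) * (Nat.choose Λ (t + 1) : ℚ)
      ≤ ∑ r ∈ Finset.Icc 1 Λ, (L r : ℚ) * (Nat.choose (Λ - r) t : ℚ) := by
  set s := Finset.Icc 1 Λ
  have hmv : MonovaryOn (fun r => (L r : ℚ)) (fun r => (Nat.choose (Λ - r) t : ℚ)) s := by
    intro i hi j hj hlt
    simp only [s, Finset.coe_Icc, Set.mem_Icc] at hi hj
    dsimp only at hlt ⊢
    have hlt' : (Λ - i).choose t < (Λ - j).choose t := by exact_mod_cast hlt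
    have hji : j < i := by
      by_contra h
      exact absurd (Nat.choose_le_choose t (by omega : Λ - j ≤ Λ - i)) (by omega)
    exact_mod_cast hmono j i hj.1 (by omega) hi.2
  have hcheb := hmv.sum_mul_sum_le_card_mul_sum
  have hcard : (s.card : ℚ) = Λ := by simp [s]
  have hs1 : ∑ i ∈ s, (L i : ℚ) = K := by
    rw [← hsum]; push_cast; rfl
  have hs2 : ∑ i ∈ s, (Nat.choose (Λ - i) t : ℚ) = Nat.choose Λ (t + 1) := by
    rw [← hockey Λ t hΛ]; push_cast; rfl
  rw [hs1, hs2, hcard] at hcheb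
  rw [div_mul_eq_mul_div, div_le_iff₀ (by exact_mod_cast hΛ)]
  linarith [hcheb]
end

section
/- Let Λ ≥ 1 and i be natural numbers with i+1 ≤ Λ, and let L_1, …, L_Λ be nonnegative rational numbers. Then Σ_{r=1}^{Λ} L_r · C(Λ−r, i) / C(Λ, i) ≥ Σ_{r=1}^{Λ} L_r · C(Λ−r, i+1) / C(Λ, i+1). -/
/-- The converse-bound coefficients `c_i = Σ_r L_r C(Λ−r,i)/C(Λ,i)` are
nonincreasing in `i`: for `i + 1 ≤ Λ` and nonnegative rationals `L_r`,
`Σ_r L_r C(Λ−r,i)/C(Λ,i) ≥ Σ_r L_r C(Λ−r,i+1)/C(Λ,i+1)`. -/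
theorem stmt_4 (Λ i : ℕ) (hΛ : 1 ≤ Λ) (hi : i + 1 ≤ Λ) (L : ℕ → ℚ)
    (hL : ∀ r, 0 ≤ L r) :
    ∑ r ∈ Finset.Icc 1 Λ, L r * (Nat.choose (Λ - r) (i + 1) : ℚ) / (Nat.choose Λ (i + 1) : ℚ)
      ≤ ∑ r ∈ Finset.Icc 1 Λ, L r * (Nat.choose (Λ - r) i : ℚ) / (Nat.choose Λ i : ℚ) := by
  apply Finset.sum_le_sum
  intro r hr
  have hC1 : (0:ℚ) < (Nat.choose Λ i : ℚ) := by
    exact_mod_cast Nat.choose_pos (le_trans (Nat.le_succ i) hi)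
  have hC2 : (0:ℚ) < (Nat.choose Λ (i+1) : ℚ) := by
    exact_mod_cast Nat.choose_pos hi
  rw [div_le_div_iff₀ hC2 hC1]
  have key : Nat.choose (Λ - r) (i+1) * Nat.choose Λ i
      ≤ Nat.choose (Λ - r) i * Nat.choose Λ (i+1) := by
    apply Nat.le_of_mul_le_mul_right _ (Nat.succ_pos i)
    have h1 := Nat.choose_succ_right_eq (Λ - r) i
    have h2 := Nat.choose_succ_right_eq Λ i
    calc Nat.choose (Λ - r) (i+1) * Nat.choose Λ i * (i+1)
        = (Nat.choose (Λ - r) (i+1) * (i+1)) * Nat.choose Λ i := by ring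
      _ = (Nat.choose (Λ - r) i * (Λ - r - i)) * Nat.choose Λ i := by rw [h1]
      _ ≤ (Nat.choose (Λ - r) i * (Λ - i)) * Nat.choose Λ i := by
          exact Nat.mul_le_mul_right _ (Nat.mul_le_mul_left _
            (Nat.sub_le_sub_right (Nat.sub_le Λ r) i))
      _ = Nat.choose (Λ - r) i * (Nat.choose Λ (i+1) * (i+1)) := by rw [h2]; ring
      _ = Nat.choose (Λ - r) i * Nat.choose Λ (i+1) * (i+1) := by ring
  have keyQ : (Nat.choose (Λ - r) (i+1) : ℚ) * Nat.choose Λ i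
      ≤ (Nat.choose (Λ - r) i : ℚ) * Nat.choose Λ (i+1) := by exact_mod_cast key
  calc L r * (Nat.choose (Λ - r) (i+1) : ℚ) * Nat.choose Λ i
      = L r * ((Nat.choose (Λ - r) (i+1) : ℚ) * Nat.choose Λ i) := by ring
    _ ≤ L r * ((Nat.choose (Λ - r) i : ℚ) * Nat.choose Λ (i+1)) :=
        mul_le_mul_of_nonneg_left keyQ (hL r)
    _ = L r * (Nat.choose (Λ - r) i : ℚ) * Nat.choose Λ (i+1) := by ring
end

section
/- Let N ≥ K ≥ 1 and Λ ≥ 1 be natural numbers, let i ≤ Λ be a natural number, and let L_1, …, L_Λ be natural numbers with 1 ≤ L_r ≤ K for every r. Writing P(n,k) for the descending factorial n!/(n−k)! (with P(n,k) = 0 when k > n), the following identity holds in the rationals: [ C(N−1, K−1) · (Λ−i) · Σ_{r=1}^{Λ} P(Λ−i−1, r−1) · (Λ−r)! · L_r · P(K−1, L_r−1) · (K−L_r)! ] / ( Λ! · P(N, K) ) = (1/N) · Σ_{r=1}^{Λ} L_r · C(Λ−r, i) / C(Λ, i). -/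
open Nat

lemma auxE1 (N K l : ℕ) (hK : 1 ≤ K) (hl : 1 ≤ l) (hlK : l ≤ K) (hKN : K ≤ N) :
    N * (Nat.choose (N - 1) (K - 1) * (Nat.descFactorial (K - 1) (l - 1) * (K - l)!)) =
      Nat.descFactorial N K := by
  have hP2 : Nat.descFactorial (K - 1) (l - 1) * (K - l)! = (K - 1)! := by
    have h : l - 1 ≤ K - 1 := Nat.sub_le_sub_right hlK 1
    have := Nat.factorial_mul_descFactorial h
    have hsub : K - 1 - (l - 1) = K - l := by omega
    rw [hsub] at this
    rw [Nat.mul_comm]; exact this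
  rw [hP2]
  -- N * C(N-1,K-1) = K * C(N,K), and C(N,K) * K! = N * P? use descFactorial_eq_factorial_mul_choose
  have h1 : N * Nat.choose (N - 1) (K - 1) = Nat.choose N K * K := by
    obtain ⟨n, rfl⟩ : ∃ n, N = n + 1 := ⟨N - 1, by omega⟩
    obtain ⟨k, rfl⟩ : ∃ k, K = k + 1 := ⟨K - 1, by omega⟩
    simpa using Nat.add_one_mul_choose_eq n k
  have h2 : Nat.descFactorial N K = K ! * Nat.choose N K :=
    Nat.descFactorial_eq_factorial_mul_choose N K
  have hKfac : K ! = K * (K - 1)! := by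
    obtain ⟨k, rfl⟩ : ∃ k, K = k + 1 := ⟨K - 1, by omega⟩
    simp [Nat.factorial_succ]
  rw [h2, hKfac, ← Nat.mul_assoc, h1]
  ring

lemma auxE2 (Λ i r : ℕ) (hi : i ≤ Λ) (hr : 1 ≤ r) (hrΛ : r ≤ Λ) :
    (Λ - i) * Nat.descFactorial (Λ - i - 1) (r - 1) * (Λ - r)! * Nat.choose Λ i =
      Nat.choose (Λ - r) i * Λ ! := by
  by_cases h : i + r ≤ Λ
  · -- (Λ-i).descFactorial r = (Λ-i) * (Λ-i-1).descFactorial (r-1)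
    have hd : Nat.descFactorial (Λ - i) r =
        (Λ - i) * Nat.descFactorial (Λ - i - 1) (r - 1) := by
      obtain ⟨m, hm⟩ : ∃ m, Λ - i = m + 1 := ⟨Λ - i - 1, by omega⟩
      obtain ⟨s, rfl⟩ : ∃ s, r = s + 1 := ⟨r - 1, by omega⟩
      rw [hm]
      simpa using Nat.succ_descFactorial_succ m s
    rw [← hd, Nat.descFactorial_eq_factorial_mul_choose]
    -- goal : r! * C(Λ-i, r) * (Λ-r)! * C(Λ, i) = C(Λ-r, i) * Λ!
    have hc : Nat.choose Λ i * Nat.choose (Λ - i) r =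
        Nat.choose (Λ - r) i * Nat.choose Λ r := by
      have e1 := Nat.choose_mul (n := Λ) (k := i + r) (s := i) (by omega)
      have e2 := Nat.choose_mul (n := Λ) (k := i + r) (s := r) (by omega)
      have hs : Nat.choose (i + r) i = Nat.choose (i + r) r := by
        rw [← Nat.choose_symm (by omega : i ≤ i + r)]
        congr 1; omega
      have e1' : Nat.choose Λ (i + r) * Nat.choose (i + r) i =
          Nat.choose Λ i * Nat.choose (Λ - i) r := by
        simpa [Nat.add_sub_cancel_left] using e1
      have e2' : Nat.choose Λ (i + r) * Nat.choose (i + r) r =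
          Nat.choose Λ r * Nat.choose (Λ - r) i := by
        have : i + r - r = i := by omega
        simpa [this] using e2
      rw [← e1', hs, e2']; ring
    have hfac : Nat.choose Λ r * r ! * (Λ - r)! = Λ ! :=
      Nat.choose_mul_factorial_mul_factorial hrΛ
    calc r ! * Nat.choose (Λ - i) r * (Λ - r)! * Nat.choose Λ i
        = (Nat.choose Λ i * Nat.choose (Λ - i) r) * (r ! * (Λ - r)!) := by ring
      _ = (Nat.choose (Λ - r) i * Nat.choose Λ r) * (r ! * (Λ - r)!) := by rw [hc]
      _ = Nat.choose (Λ - r) i * (Nat.choose Λ r * r ! * (Λ - r)!) := by ring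
      _ = Nat.choose (Λ - r) i * Λ ! := by rw [hfac]
  · -- both sides zero
    have hR : Nat.choose (Λ - r) i = 0 := Nat.choose_eq_zero_of_lt (by omega)
    rw [hR, Nat.zero_mul]
    by_cases hiΛ : i = Λ
    · simp [hiΛ]
    · have : Nat.descFactorial (Λ - i - 1) (r - 1) = 0 :=
        Nat.descFactorial_eq_zero_iff_lt.2 (by omega)
      simp [this]

/-- Simplification of the subfile-counting coefficient `Q_i` of the index-coding
converse (`P(n,k)` is the descending factorial, `Nat.descFactorial`):
`[C(N−1,K−1)·(Λ−i)·Σ_{r=1}^{Λ} P(Λ−i−1,r−1)·(Λ−r)!·L_r·P(K−1,L_r−1)·(K−L_r)!]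
  / (Λ!·P(N,K)) = (1/N)·Σ_{r=1}^{Λ} L_r·C(Λ−r,i)/C(Λ,i)`. -/
theorem stmt_7 (N K Λ i : ℕ) (hKN : K ≤ N) (hK : 1 ≤ K) (hΛ : 1 ≤ Λ)
    (hi : i ≤ Λ) (L : ℕ → ℕ)
    (hL : ∀ r ∈ Finset.Icc 1 Λ, 1 ≤ L r ∧ L r ≤ K) :
    ((Nat.choose (N - 1) (K - 1) : ℚ) * ((Λ : ℚ) - (i : ℚ)) *
          ∑ r ∈ Finset.Icc 1 Λ,
            (Nat.descFactorial (Λ - i - 1) (r - 1) : ℚ) *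
              (Nat.factorial (Λ - r) : ℚ) * (L r : ℚ) *
              (Nat.descFactorial (K - 1) (L r - 1) : ℚ) *
              (Nat.factorial (K - L r) : ℚ)) /
        ((Nat.factorial Λ : ℚ) * (Nat.descFactorial N K : ℚ))
      = (1 / (N : ℚ)) *
          ∑ r ∈ Finset.Icc 1 Λ,
            (L r : ℚ) * (Nat.choose (Λ - r) i : ℚ) / (Nat.choose Λ i : ℚ) := by
  rw [Finset.mul_sum, Finset.sum_div, Finset.mul_sum]
  refine Finset.sum_congr rfl ?_
  intro r hr
  simp only [Finset.mem_Icc] at hr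
  obtain ⟨hl1, hlK⟩ := hL r (Finset.mem_Icc.mpr hr)
  set l := L r with hldef
  have hN0 : (N : ℚ) ≠ 0 := by
    have : 0 < N := by omega
    exact_mod_cast this.ne'
  have hΛf : (Λ ! : ℚ) ≠ 0 := by exact_mod_cast (Nat.factorial_pos Λ).ne'
  have hP : ((Nat.descFactorial N K : ℕ) : ℚ) ≠ 0 := by
    have : Nat.descFactorial N K ≠ 0 := by
      intro h; exact absurd (Nat.descFactorial_eq_zero_iff_lt.1 h) (by omega)
    exact_mod_cast this
  have hC : ((Nat.choose Λ i : ℕ) : ℚ) ≠ 0 := by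
    exact_mod_cast (Nat.choose_pos hi).ne'
  have hcast : ((Λ : ℚ) - (i : ℚ)) = ((Λ - i : ℕ) : ℚ) := by
    rw [Nat.cast_sub hi]
  have h1 := congrArg (fun n : ℕ => (n : ℚ)) (auxE1 N K l hK hl1 hlK hKN)
  have h2 := congrArg (fun n : ℕ => (n : ℚ)) (auxE2 Λ i r hi hr.1 hr.2)
  push_cast at h1 h2
  rw [hcast]
  field_simp
  linear_combination ((Nat.choose (Λ - r) i : ℚ) * (Λ !)) * h1 +
      ((N : ℚ) * (Nat.choose (N - 1) (K - 1)) * (Nat.descFactorial (K - 1) (l - 1)) *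
        ((K - l)!)) * h2
end

section
/- Let Λ ≥ 1 be a natural number and let L_1, …, L_Λ be nonnegative rationals. Define c_i = Σ_{r=1}^{Λ} L_r · C(Λ−r, i) / C(Λ, i) for i ∈ {0,1,…,Λ}. Then for every 1 ≤ i ≤ Λ−1, c_{i+1} + c_{i−1} ≥ 2·c_i; that is, (c_i)_{i=0}^{Λ} is a convex sequence. -/
lemma scalar_ineq' (a b : ℕ) (hab : a < b) :
    2 * (a * (b - 1)) ≤ a * (a - 1) + b * (b - 1) := by
  obtain ⟨t, rfl⟩ := Nat.exists_eq_add_of_lt hab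
  cases a with
  | zero => simp
  | succ s =>
      have h1 : s + 1 + t + 1 - 1 = s + t + 1 := by omega
      have h2 : s + 1 - 1 = s := by omega
      rw [h1, h2]; nlinarith

/-- Convexity of the delay sequence: with
`c i = (Σ_{r=1}^{Λ} L_r·C(Λ−r,i))/C(Λ,i)` for nonnegative rationals `L_r`,
for every `1 ≤ i ≤ Λ−1` we have `c (i+1) + c (i−1) ≥ 2·c i`. -/
theorem stmt_10 (Λ : ℕ) (hΛ : 1 ≤ Λ) (L : ℕ → ℚ) (hL : ∀ r, 0 ≤ L r)
    (c : ℕ → ℚ)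
    (hc : ∀ i, c i = (∑ r ∈ Finset.Icc 1 Λ, L r * (Nat.choose (Λ - r) i : ℚ)) /
      (Nat.choose Λ i : ℚ)) :
    ∀ i, 1 ≤ i → i + 1 ≤ Λ → 2 * c i ≤ c (i + 1) + c (i - 1) := by
  intro i hi1 hiΛ
  obtain ⟨j, rfl⟩ : ∃ j, i = j + 1 := ⟨i - 1, by omega⟩
  have hj : j + 1 - 1 = j := by omega
  rw [hc, hc, hc, hj]
  -- key nat inequality per term (copy of key_ineq, proved inline as a `have`)
  have key : ∀ m : ℕ, m < Λ →
      2 * Nat.choose m (j+1) * (Nat.choose Λ (j+2) * Nat.choose Λ j) ≤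
        (Nat.choose m (j+2) * Nat.choose Λ j + Nat.choose m j * Nat.choose Λ (j+2)) *
          Nat.choose Λ (j+1) := by
    intro m hmn
    set n := Λ with hn
    have hjn : j + 2 ≤ n := by omega
    set A := Nat.choose m j with hA
    set B := Nat.choose n j with hB
    have h1 : Nat.choose m (j+1) * (j+1) = A * (m - j) := Nat.choose_succ_right_eq m j
    have h2 : Nat.choose n (j+1) * (j+1) = B * (n - j) := Nat.choose_succ_right_eq n j
    have h3 : Nat.choose m (j+2) * (j+2) = Nat.choose m (j+1) * (m - (j+1)) :=
      Nat.choose_succ_right_eq m (j+1)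
    have h4 : Nat.choose n (j+2) * (j+2) = Nat.choose n (j+1) * (n - (j+1)) :=
      Nat.choose_succ_right_eq n (j+1)
    have e3 : Nat.choose m (j+2) * ((j+1)*(j+2)) = A * ((m - j) * (m - (j+1))) := by
      calc Nat.choose m (j+2) * ((j+1)*(j+2))
          = (Nat.choose m (j+2) * (j+2)) * (j+1) := by ring
        _ = (Nat.choose m (j+1) * (j+1)) * (m - (j+1)) := by rw [h3]; ring
        _ = A * ((m - j) * (m - (j+1))) := by rw [h1]; ring
    have e4 : Nat.choose n (j+2) * ((j+1)*(j+2)) = B * ((n - j) * (n - (j+1))) := by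
      calc Nat.choose n (j+2) * ((j+1)*(j+2))
          = (Nat.choose n (j+2) * (j+2)) * (j+1) := by ring
        _ = (Nat.choose n (j+1) * (j+1)) * (n - (j+1)) := by rw [h4]; ring
        _ = B * ((n - j) * (n - (j+1))) := by rw [h2]; ring
    set a := m - j with ha
    set b := n - j with hb
    have ha1 : m - (j+1) = a - 1 := by omega
    have hb1 : n - (j+1) = b - 1 := by omega
    have hab : a < b := by omega
    have P : 0 < (j+1)*((j+1)*(j+2)) := by positivity
    refine Nat.le_of_mul_le_mul_left ?_ P
    have E1 : (j+1)*((j+1)*(j+2)) * (2 * Nat.choose m (j+1) * (Nat.choose n (j+2) * B))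
        = (A * (B * B * b)) * (2 * (a * (b - 1))) := by
      calc (j+1)*((j+1)*(j+2)) * (2 * Nat.choose m (j+1) * (Nat.choose n (j+2) * B))
          = 2 * (Nat.choose m (j+1) * (j+1)) * ((Nat.choose n (j+2) * ((j+1)*(j+2))) * B) := by
            ring
        _ = 2 * (A * a) * ((B * (b * (b-1))) * B) := by rw [h1, e4, hb1]
        _ = (A * (B * B * b)) * (2 * (a * (b - 1))) := by ring
    have E2 : (j+1)*((j+1)*(j+2)) *
        ((Nat.choose m (j+2) * B + A * Nat.choose n (j+2)) * Nat.choose n (j+1))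
        = (A * (B * B * b)) * (a * (a - 1) + b * (b - 1)) := by
      calc (j+1)*((j+1)*(j+2)) *
            ((Nat.choose m (j+2) * B + A * Nat.choose n (j+2)) * Nat.choose n (j+1))
          = ((Nat.choose m (j+2) * ((j+1)*(j+2))) * B
              + A * (Nat.choose n (j+2) * ((j+1)*(j+2)))) * (Nat.choose n (j+1) * (j+1)) := by
            ring
        _ = ((A * (a * (a-1))) * B + A * (B * (b * (b-1)))) * (B * b) := by
            rw [e3, e4, h2, ha1, hb1]
        _ = (A * (B * B * b)) * (a * (a - 1) + b * (b - 1)) := by ring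
    rw [E1, E2]
    exact Nat.mul_le_mul_left _ (scalar_ineq' a b hab)
  -- rational setup
  set S : ℕ → ℚ := fun k => ∑ r ∈ Finset.Icc 1 Λ, L r * (Nat.choose (Λ - r) k : ℚ) with hS
  have hD0 : (0:ℚ) < (Nat.choose Λ j : ℚ) := by
    exact_mod_cast Nat.choose_pos (by omega : j ≤ Λ)
  have hD1 : (0:ℚ) < (Nat.choose Λ (j+1) : ℚ) := by
    exact_mod_cast Nat.choose_pos (by omega : j + 1 ≤ Λ)
  have hD2 : (0:ℚ) < (Nat.choose Λ (j+2) : ℚ) := by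
    exact_mod_cast Nat.choose_pos (by omega : j + 2 ≤ Λ)
  -- cross-multiplied sum inequality
  have T : 2 * S (j+1) * ((Nat.choose Λ (j+2) : ℚ) * (Nat.choose Λ j : ℚ)) ≤
      (S (j+2) * (Nat.choose Λ j : ℚ) + S j * (Nat.choose Λ (j+2) : ℚ)) *
        (Nat.choose Λ (j+1) : ℚ) := by
    simp only [hS, Finset.sum_mul, Finset.mul_sum, ← Finset.sum_add_distrib]
    refine Finset.sum_le_sum ?_
    intro r hr
    simp only [Finset.mem_Icc] at hr
    have hm : Λ - r < Λ := Nat.sub_lt (by omega) (by omega)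
    have N : (2 * Nat.choose (Λ - r) (j+1) * (Nat.choose Λ (j+2) * Nat.choose Λ j) : ℚ) ≤
        ((Nat.choose (Λ - r) (j+2) * Nat.choose Λ j
          + Nat.choose (Λ - r) j * Nat.choose Λ (j+2)) * Nat.choose Λ (j+1) : ℚ) := by
      exact_mod_cast key (Λ - r) hm
    have hLr := hL r
    calc 2 * (L r * (Nat.choose (Λ - r) (j+1) : ℚ)) *
          ((Nat.choose Λ (j+2) : ℚ) * (Nat.choose Λ j : ℚ))
        = L r * (2 * Nat.choose (Λ - r) (j+1) * (Nat.choose Λ (j+2) * Nat.choose Λ j) : ℚ) := by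
          push_cast; ring
      _ ≤ L r * ((Nat.choose (Λ - r) (j+2) * Nat.choose Λ j
          + Nat.choose (Λ - r) j * Nat.choose Λ (j+2)) * Nat.choose Λ (j+1) : ℚ) :=
          mul_le_mul_of_nonneg_left N hLr
      _ = (L r * (Nat.choose (Λ - r) (j+2) : ℚ) * (Nat.choose Λ j : ℚ)
          + L r * (Nat.choose (Λ - r) j : ℚ) * (Nat.choose Λ (j+2) : ℚ)) *
            (Nat.choose Λ (j+1) : ℚ) := by ring
  -- conclude by clearing denominators
  rw [div_add_div _ _ (ne_of_gt hD2) (ne_of_gt hD0), mul_div_assoc']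
  rw [div_le_div_iff₀ hD1 (by positivity)]
  calc 2 * S (j+1) * ((Nat.choose Λ (j+2) : ℚ) * (Nat.choose Λ j : ℚ))
      ≤ (S (j+2) * (Nat.choose Λ j : ℚ) + S j * (Nat.choose Λ (j+2) : ℚ)) *
          (Nat.choose Λ (j+1) : ℚ) := T
    _ = (S (j+2) * (Nat.choose Λ j : ℚ) + (Nat.choose Λ (j+2) : ℚ) * S j) *
          (Nat.choose Λ (j+1) : ℚ) := by ring
end

section
/- Let Λ ≥ 1 and t ≤ Λ be natural numbers, let L_1, …, L_Λ be nonnegative rationals, and let x_0, …, x_Λ be nonnegative rationals with Σ_{i=0}^{Λ} x_i = 1 and Σ_{i=0}^{Λ} i·x_i ≤ t. Then Σ_{i=0}^{Λ} x_i · ( Σ_{r=1}^{Λ} L_r · C(Λ−r, i) / C(Λ, i) ) ≥ Σ_{r=1}^{Λ} L_r · C(Λ−r, t) / C(Λ, t). -/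
open Finset

/-- For `j ≥ j0`: `C(j,r+1) ≥ C(j0,r+1) + (j-j0)*C(j0,r)`. -/
lemma supp_ge (r j0 : ℕ) : ∀ k : ℕ, Nat.choose j0 (r+1) + k * Nat.choose j0 r
    ≤ Nat.choose (j0 + k) (r+1) := by
  intro k
  induction k with
  | zero => simp
  | succ k ih =>
      have h1 : Nat.choose (j0 + k) r ≥ Nat.choose j0 r :=
        Nat.choose_le_choose r (Nat.le_add_right _ _)
      have h2 : Nat.choose (j0 + (k+1)) (r+1)
          = Nat.choose (j0+k) r + Nat.choose (j0+k) (r+1) := by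
        rw [← Nat.add_assoc]; exact Nat.choose_succ_succ' (j0+k) r
      have h3 : (k+1) * Nat.choose j0 r = k * Nat.choose j0 r + Nat.choose j0 r := by ring
      omega

/-- For `j ≤ j0`: `C(j0,r+1) ≤ C(j,r+1) + (j0-j)*C(j0,r)`. -/
lemma supp_le (r : ℕ) : ∀ j0 j : ℕ, j ≤ j0 →
    Nat.choose j0 (r+1) ≤ Nat.choose j (r+1) + (j0 - j) * Nat.choose j0 r := by
  intro j0
  induction j0 with
  | zero => intro j hj; interval_cases j; simp
  | succ j0 ih =>
      intro j hj
      rcases Nat.eq_or_lt_of_le hj with h | h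
      · subst h; simp
      · have hj' : j ≤ j0 := Nat.lt_succ_iff.mp h
        have h1 := ih j hj'
        have h2 : Nat.choose (j0+1) (r+1) = Nat.choose j0 r + Nat.choose j0 (r+1) :=
          Nat.choose_succ_succ' j0 r
        have h3 : Nat.choose j0 r ≤ Nat.choose (j0+1) r := Nat.choose_le_choose r (by omega)
        have h4 : (j0 - j) * Nat.choose j0 r ≤ (j0 - j) * Nat.choose (j0+1) r :=
          Nat.mul_le_mul_left _ h3
        have h5 : (j0 + 1 - j) * Nat.choose (j0+1) r
            = (j0 - j) * Nat.choose (j0+1) r + Nat.choose (j0+1) r := by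
          have : j0 + 1 - j = (j0 - j) + 1 := by omega
          rw [this, Nat.add_mul, Nat.one_mul]
        omega

/-- Supporting-line inequality over ℚ. -/
lemma supp_line (r j0 j : ℕ) :
    (Nat.choose j0 (r+1) : ℚ) + ((j : ℚ) - j0) * Nat.choose j0 r ≤ Nat.choose j (r+1) := by
  rcases le_total j0 j with h | h
  · obtain ⟨k, rfl⟩ := Nat.exists_eq_add_of_le h
    have := supp_ge r j0 k
    have hk : ((j0 + k : ℕ) : ℚ) - j0 = (k : ℚ) := by push_cast; ring
    rw [hk]
    exact_mod_cast this
  · have := supp_le r j0 j h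
    have hc : ((j0 - j : ℕ) : ℚ) = (j0 : ℚ) - j := by
      have : (j : ℚ) ≤ j0 := by exact_mod_cast h
      push_cast [Nat.cast_sub h]; ring
    have h2 : (Nat.choose j0 (r+1) : ℚ) ≤ Nat.choose j (r+1) + ((j0:ℚ) - j) * Nat.choose j0 r := by
      calc (Nat.choose j0 (r+1) : ℚ)
          ≤ (Nat.choose j (r+1) + (j0 - j) * Nat.choose j0 r : ℕ) := by exact_mod_cast this
        _ = Nat.choose j (r+1) + ((j0:ℚ) - j) * Nat.choose j0 r := by push_cast [hc]; ring
    linarith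

/-- Trinomial-style identity. -/
lemma choose_swap {Λ i r : ℕ} (hi : i ≤ Λ) (hr : r ≤ Λ) :
    Nat.choose Λ i * Nat.choose (Λ - i) r = Nat.choose Λ r * Nat.choose (Λ - r) i := by
  rcases le_or_gt (i + r) Λ with h | h
  · have h1 : Nat.choose Λ (Λ - i) * Nat.choose (Λ - i) r
        = Nat.choose Λ r * Nat.choose (Λ - r) (Λ - i - r) :=
      Nat.choose_mul (by omega)
    rw [Nat.choose_symm hi] at h1
    have h2 : Nat.choose (Λ - r) (Λ - i - r) = Nat.choose (Λ - r) i := by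
      have : Λ - i - r = (Λ - r) - i := by omega
      rw [this, Nat.choose_symm (by omega)]
    rw [h1, h2]
  · have h1 : Nat.choose (Λ - i) r = 0 := Nat.choose_eq_zero_of_lt (by omega)
    have h2 : Nat.choose (Λ - r) i = 0 := Nat.choose_eq_zero_of_lt (by omega)
    rw [h1, h2, Nat.mul_zero, Nat.mul_zero]

/-- Optimization step of the converse: for `t ≤ Λ`, nonnegative rationals `L_r`,
and nonnegative `x_0,…,x_Λ` with `Σ x_i = 1` and `Σ i·x_i ≤ t`,
`Σ_i x_i·(Σ_r L_r·C(Λ−r,i)/C(Λ,i)) ≥ Σ_r L_r·C(Λ−r,t)/C(Λ,t)`. -/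
theorem stmt_11 (Λ t : ℕ) (hΛ : 1 ≤ Λ) (ht : t ≤ Λ) (L : ℕ → ℚ)
    (hL : ∀ r, 0 ≤ L r) (x : ℕ → ℚ) (hx : ∀ i, 0 ≤ x i)
    (hsum : ∑ i ∈ Finset.range (Λ + 1), x i = 1)
    (hmean : ∑ i ∈ Finset.range (Λ + 1), (i : ℚ) * x i ≤ (t : ℚ)) :
    ∑ r ∈ Finset.Icc 1 Λ, L r * (Nat.choose (Λ - r) t : ℚ) / (Nat.choose Λ t : ℚ)
      ≤ ∑ i ∈ Finset.range (Λ + 1),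
          x i * (∑ r ∈ Finset.Icc 1 Λ, L r * (Nat.choose (Λ - r) i : ℚ) /
            (Nat.choose Λ i : ℚ)) := by
  -- rewrite terms using choose_swap
  have key : ∀ i ∈ Finset.range (Λ + 1), ∀ r ∈ Finset.Icc 1 Λ,
      L r * (Nat.choose (Λ - r) i : ℚ) / (Nat.choose Λ i : ℚ)
        = L r / (Nat.choose Λ r : ℚ) * (Nat.choose (Λ - i) r : ℚ) := by
    intro i hi r hr
    simp only [Finset.mem_range, Finset.mem_Icc] at hi hr
    have hi' : i ≤ Λ := by omega
    have h := choose_swap hi' hr.2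
    have hci : (0:ℚ) < Nat.choose Λ i := by exact_mod_cast Nat.choose_pos hi'
    have hcr : (0:ℚ) < Nat.choose Λ r := by exact_mod_cast Nat.choose_pos hr.2
    have h' : (Nat.choose Λ i : ℚ) * Nat.choose (Λ - i) r
        = Nat.choose Λ r * Nat.choose (Λ - r) i := by exact_mod_cast h
    rw [div_mul_eq_mul_div, div_eq_div_iff hci.ne' hcr.ne']
    linear_combination (-(L r)) * h'
  have keyt := fun r hr => key t (Finset.mem_range.mpr (by omega)) r hr
  rw [Finset.sum_congr rfl keyt]
  have rhs_eq : ∀ i ∈ Finset.range (Λ + 1),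
      x i * (∑ r ∈ Finset.Icc 1 Λ, L r * (Nat.choose (Λ - r) i : ℚ) / (Nat.choose Λ i : ℚ))
        = ∑ r ∈ Finset.Icc 1 Λ, L r / (Nat.choose Λ r : ℚ) * (x i * Nat.choose (Λ - i) r) := by
    intro i hi
    rw [Finset.sum_congr rfl (key i hi), Finset.mul_sum]
    exact Finset.sum_congr rfl (fun r _ => by ring)
  rw [Finset.sum_congr rfl rhs_eq, Finset.sum_comm]
  apply Finset.sum_le_sum
  intro r hr
  simp only [Finset.mem_Icc] at hr
  obtain ⟨s, rfl⟩ := Nat.exists_eq_add_of_le hr.1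
  set r := 1 + s with hrdef
  have hcr : (0:ℚ) < Nat.choose Λ r := by exact_mod_cast Nat.choose_pos hr.2
  have hcoef : 0 ≤ L r / (Nat.choose Λ r : ℚ) := div_nonneg (hL r) hcr.le
  rw [show L r / (Nat.choose Λ r : ℚ) * (Nat.choose (Λ - t) r : ℚ)
      = L r / (Nat.choose Λ r : ℚ) * (Nat.choose (Λ - t) r : ℚ) from rfl]
  have main : (Nat.choose (Λ - t) r : ℚ)
      ≤ ∑ i ∈ Finset.range (Λ + 1), x i * Nat.choose (Λ - i) r := by
    have hr1 : r = s + 1 := by omega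
    have step : ∀ i ∈ Finset.range (Λ + 1),
        x i * ((Nat.choose (Λ - t) r : ℚ) + ((t:ℚ) - i) * Nat.choose (Λ - t) s)
          ≤ x i * Nat.choose (Λ - i) r := by
      intro i hi
      simp only [Finset.mem_range] at hi
      have hi' : i ≤ Λ := by omega
      apply mul_le_mul_of_nonneg_left _ (hx i)
      have := supp_line s (Λ - t) (Λ - i)
      rw [← hr1] at this
      have hcast : ((Λ - i : ℕ) : ℚ) - ((Λ - t : ℕ) : ℚ) = (t:ℚ) - i := by
        rw [Nat.cast_sub hi', Nat.cast_sub ht]; ring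
      rw [hcast] at this
      exact this
    calc (Nat.choose (Λ - t) r : ℚ)
        ≤ ∑ i ∈ Finset.range (Λ + 1),
            x i * ((Nat.choose (Λ - t) r : ℚ) + ((t:ℚ) - i) * Nat.choose (Λ - t) s) := by
          have expand : ∑ i ∈ Finset.range (Λ + 1),
              x i * ((Nat.choose (Λ - t) r : ℚ) + ((t:ℚ) - i) * Nat.choose (Λ - t) s)
              = (Nat.choose (Λ - t) r : ℚ) * (∑ i ∈ Finset.range (Λ + 1), x i)
                + (Nat.choose (Λ - t) s : ℚ) *
                  ((t:ℚ) * (∑ i ∈ Finset.range (Λ + 1), x i)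
                    - ∑ i ∈ Finset.range (Λ + 1), (i:ℚ) * x i) := by
            simp only [mul_sub, Finset.mul_sum, ← Finset.sum_sub_distrib,
              ← Finset.sum_add_distrib]
            exact Finset.sum_congr rfl (fun i _ => by ring)
          rw [expand, hsum]
          have hs : (0:ℚ) ≤ Nat.choose (Λ - t) s := by positivity
          nlinarith [mul_le_mul_of_nonneg_left hmean hs]
      _ ≤ ∑ i ∈ Finset.range (Λ + 1), x i * Nat.choose (Λ - i) r :=
          Finset.sum_le_sum step
  calc L r / (Nat.choose Λ r : ℚ) * (Nat.choose (Λ - t) r : ℚ)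
      ≤ L r / (Nat.choose Λ r : ℚ) * ∑ i ∈ Finset.range (Λ + 1), x i * Nat.choose (Λ - i) r :=
        mul_le_mul_of_nonneg_left main hcoef
    _ = ∑ i ∈ Finset.range (Λ + 1),
          L r / (Nat.choose Λ r : ℚ) * (x i * Nat.choose (Λ - i) r) := Finset.mul_sum _ _ _
end
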